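/- Let 𝔤 = 𝔯₋ ⊕ 𝔪 ⊕ 𝔯₊ be as above, with 𝔯₊ an 𝔪-module under the adjoint action and z central in 𝔪 with [z,x]=x for x ∈ 𝔯₊. Then for any c ∈ ℂ, the map φ: 𝔪 ⊕ 𝔯₊ → U(𝔤) given by φ(m) = m for m ∈ 𝔪 and φ(x) = x z_c for x ∈ 𝔯₊ (where z_c = z + c) is an injective Lie algebra homomorphism from the parabolic subalgebra 𝔭 = 𝔪 ⊕ 𝔯₊ into U(𝔤) with the commutator bracket. -/

import Mathlib

namespace PBWAux

attribute [local instance 100] LieRing.ofAssociativeRing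
variable {I : Type*} [LinearOrder I]

noncomputable def mmin (M : Multiset I) : WithTop I := (M.map ((↑) : I → WithTop I)).inf

lemma mmin_zero : mmin (0 : Multiset I) = ⊤ := by simp [mmin]

lemma mmin_cons (a : I) (M : Multiset I) : mmin (a ::ₘ M) = min ↑a (mmin M) := by
  simp [mmin, Multiset.inf_cons]

lemma mmin_le {M : Multiset I} {a : I} (h : a ∈ M) : mmin M ≤ ↑a :=
  Multiset.inf_le (Multiset.mem_map_of_mem _ h)

lemma le_mmin {M : Multiset I} {a : WithTop I} : a ≤ mmin M ↔ ∀ b ∈ M, a ≤ ↑b := by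
  rw [mmin, Multiset.le_inf]
  constructor
  · intro h b hb; exact h _ (Multiset.mem_map_of_mem _ hb)
  · rintro h b hb; obtain ⟨c, hc, rfl⟩ := Multiset.mem_map.mp hb; exact h c hc

lemma exists_mmin {M : Multiset I} (h : M ≠ 0) : ∃ j : I, mmin M = ↑j ∧ j ∈ M := by
  induction M using Multiset.induction with
  | empty => exact absurd rfl h
  | cons a s ih =>
    rw [mmin_cons]
    rcases eq_or_ne s 0 with rfl | hs
    · exact ⟨a, by simp [mmin_zero], Multiset.mem_cons_self a 0⟩
    · obtain ⟨j, hj, hjm⟩ := ih hs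
      rcases le_total (↑a : WithTop I) (mmin s) with hle | hle
      · exact ⟨a, by rw [min_eq_left hle], Multiset.mem_cons_self a s⟩
      · exact ⟨j, by rw [min_eq_right hle, hj], Multiset.mem_cons_of_mem hjm⟩

variable {L : Type*} [LieRing L] [LieAlgebra ℂ L]

noncomputable def r (B : Module.Basis I ℂ L) (M : Multiset I) (i : I) : Multiset I →₀ ℂ :=
  if hM : M = 0 then 0
  else
    let j : I := (mmin M).untopD i
    have hj : j ∈ M := by
      show (mmin M).untopD i ∈ M
      obtain ⟨j0, hj0, hj0m⟩ := exists_mmin hM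
      simpa [hj0, WithTop.untopD_coe] using hj0m
    if i ≤ j then 0
    else
      (r B (M.erase j) i).sum (fun N a =>
        if hc : Multiset.card N < Multiset.card M then
          a • (Finsupp.single (j ::ₘ N) 1 + r B N j) else 0)
      + (B.repr ⁅B i, B j⁆).sum (fun k c =>
          c • (Finsupp.single (k ::ₘ M.erase j) 1 + r B (M.erase j) k))
termination_by Multiset.card M
decreasing_by
  · exact Multiset.card_erase_lt_of_mem hj
  · exact hc
  · exact Multiset.card_erase_lt_of_mem hj

variable (B : Module.Basis I ℂ L)

lemma r_eq_zero {M : Multiset I} {i : I} (h : (↑i : WithTop I) ≤ mmin M) : r B M i = 0 := by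
  rcases eq_or_ne M 0 with rfl | hM
  · rw [r]; simp
  · obtain ⟨j0, hj0, _⟩ := exists_mmin hM
    have hu : (mmin M).untopD i = j0 := by rw [hj0, WithTop.untopD_coe]
    have hij : i ≤ j0 := by rwa [hj0, WithTop.coe_le_coe] at h
    rw [r, dif_neg hM]
    simp only [hu, if_pos hij]

lemma r_supp_aux (n : ℕ) : ∀ (M : Multiset I), Multiset.card M ≤ n → ∀ (i : I),
    ∀ N ∈ (r B M i).support, Multiset.card N ≤ Multiset.card M := by
  induction n with
  | zero =>
    intro M hM i N hN
    rw [Multiset.card_eq_zero.mp (Nat.le_zero.mp hM)] at hN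
    rw [r] at hN; simp at hN
  | succ n ih =>
    intro M hM i N hN
    rcases eq_or_ne M 0 with rfl | hM0
    · rw [r] at hN; simp at hN
    obtain ⟨j0, hj0, hj0m⟩ := exists_mmin hM0
    have hu : (mmin M).untopD i = j0 := by rw [hj0, WithTop.untopD_coe]
    by_cases hij : i ≤ j0
    · rw [r_eq_zero B (by rw [hj0]; exact_mod_cast hij)] at hN; simp at hN
    have hMc : Multiset.card (M.erase j0) < Multiset.card M :=
      Multiset.card_erase_lt_of_mem hj0m
    have hM'n : Multiset.card (M.erase j0) ≤ n := by omega
    rw [r, dif_neg hM0] at hN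
    simp only [hu, if_neg hij] at hN
    rcases Finset.mem_union.mp (Finsupp.support_add hN) with hN | hN
    · obtain ⟨N', hN', hNin⟩ := Finset.mem_biUnion.mp (Finsupp.support_sum hN)
      have hN'c : Multiset.card N' ≤ Multiset.card (M.erase j0) := ih _ hM'n _ _ hN'
      by_cases hc : Multiset.card N' < Multiset.card M
      · rw [dif_pos hc] at hNin
        rcases Finset.mem_union.mp
          (Finsupp.support_add (Finsupp.support_smul hNin)) with h | h
        · have := Finsupp.support_single_subset h
          simp only [Finset.mem_singleton] at this
          subst this
          simp only [Multiset.card_cons]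
          omega
        · have := ih _ (le_trans hN'c hM'n) _ _ h
          omega
      · rw [dif_neg hc] at hNin; simp at hNin
    · obtain ⟨k, _, hNin⟩ := Finset.mem_biUnion.mp (Finsupp.support_sum hN)
      rcases Finset.mem_union.mp
        (Finsupp.support_add (Finsupp.support_smul hNin)) with h | h
      · have := Finsupp.support_single_subset h
        simp only [Finset.mem_singleton] at this
        subst this
        simp only [Multiset.card_cons]
        omega
      · have := ih _ hM'n _ _ h
        omega

lemma r_supp {M : Multiset I} {i : I} : ∀ N ∈ (r B M i).support,
    Multiset.card N ≤ Multiset.card M := r_supp_aux B _ M le_rfl i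

lemma r_eq {M : Multiset I} {i j0 : I} (hM : M ≠ 0) (hj0 : mmin M = ↑j0)
    (hij : ¬ i ≤ j0) :
    r B M i = (r B (M.erase j0) i).sum (fun N a =>
        a • (Finsupp.single (j0 ::ₘ N) 1 + r B N j0))
      + (B.repr ⁅B i, B j0⁆).sum (fun k c =>
          c • (Finsupp.single (k ::ₘ M.erase j0) 1 + r B (M.erase j0) k)) := by
  have hu : (mmin M).untopD i = j0 := by rw [hj0, WithTop.untopD_coe]
  rw [r, dif_neg hM]
  simp only [hu, if_neg hij]
  congr 1
  apply Finsupp.sum_congr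
  intro N hN
  have h2 : j0 ∈ M := by
    obtain ⟨j1, h1, h1m⟩ := exists_mmin hM
    rwa [show j1 = j0 from WithTop.coe_injective (h1 ▸ hj0)] at h1m
  have : Multiset.card N < Multiset.card M := by
    have h1 := r_supp B N hN
    have h3 := Multiset.card_erase_lt_of_mem h2
    omega
  rw [dif_pos this]

noncomputable def fmon (M : Multiset I) (i : I) : Multiset I →₀ ℂ :=
  Finsupp.single (i ::ₘ M) 1 + r B M i

noncomputable def T (i : I) : (Multiset I →₀ ℂ) →ₗ[ℂ] (Multiset I →₀ ℂ) :=
  Finsupp.lsum ℂ fun M => LinearMap.toSpanSingleton ℂ _ (fmon B M i)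

noncomputable def σa : L →ₗ[ℂ] (Multiset I →₀ ℂ) →ₗ[ℂ] (Multiset I →₀ ℂ) :=
  B.constr ℂ (T B)

lemma T_apply (i : I) (v : Multiset I →₀ ℂ) :
    T B i v = v.sum fun M a => a • fmon B M i := by
  rw [T, Finsupp.lsum_apply]
  rfl

lemma T_single (i : I) (M : Multiset I) :
    T B i (Finsupp.single M 1) = fmon B M i := by
  rw [T_apply, Finsupp.sum_single_index (by simp), one_smul]

lemma σa_basis (i : I) : σa B (B i) = T B i := B.constr_basis ℂ _ i

lemma σa_single (y : L) (M : Multiset I) :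
    σa B y (Finsupp.single M 1) = (B.repr y).sum fun k c => c • fmon B M k := by
  rw [σa, Module.Basis.constr_apply]
  simp only [Finsupp.sum, LinearMap.coe_sum, Finset.sum_apply, LinearMap.smul_apply, T_single]


lemma T_single_min {M : Multiset I} {i : I} (h : (↑i : WithTop I) ≤ mmin M) :
    T B i (Finsupp.single M 1) = Finsupp.single (i ::ₘ M) 1 := by
  rw [T_single, fmon, r_eq_zero B h, add_zero]

lemma T_cons {M' : Multiset I} {i j : I} (hj : (↑j : WithTop I) ≤ mmin M') (hij : j < i) :
    T B i (Finsupp.single (j ::ₘ M') 1) =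
      T B j (T B i (Finsupp.single M' 1)) + σa B ⁅B i, B j⁆ (Finsupp.single M' 1) := by
  have hmin : mmin (j ::ₘ M') = ↑j := by rw [mmin_cons]; exact min_eq_left hj
  have hM0 : (j ::ₘ M') ≠ (0 : Multiset I) := Multiset.cons_ne_zero
  have her : (j ::ₘ M').erase j = M' := Multiset.erase_cons_head j M'
  have hr0 : r B (i ::ₘ M') j = 0 := by
    apply r_eq_zero
    rw [mmin_cons]
    exact le_min (WithTop.coe_le_coe.mpr hij.le) hj
  rw [T_single, fmon, r_eq B hM0 hmin (not_le.mpr hij), her,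
    T_single, fmon, map_add, T_single, fmon, hr0, T_apply, σa_single]
  simp only [fmon, Multiset.cons_swap i j M']
  abel

lemma comm_single_min {N : Multiset I} {i j : I} (hj : (↑j : WithTop I) ≤ mmin N)
    (hij : j < i) :
    T B i (T B j (Finsupp.single N 1)) =
      T B j (T B i (Finsupp.single N 1)) + σa B ⁅B i, B j⁆ (Finsupp.single N 1) := by
  rw [T_single_min B hj, T_cons B hj hij]



noncomputable def Deg (n : ℕ) : Submodule ℂ (Multiset I →₀ ℂ) :=
  Finsupp.supported ℂ ℂ {M : Multiset I | Multiset.card M ≤ n}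

lemma Deg_mono {m n : ℕ} (h : m ≤ n) : Deg (I := I) m ≤ Deg n :=
  Finsupp.supported_mono (fun M hM => le_trans hM h)

lemma single_mem_Deg {M : Multiset I} {n : ℕ} (h : Multiset.card M ≤ n) :
    Finsupp.single M (1 : ℂ) ∈ Deg n :=
  Finsupp.single_mem_supported ℂ 1 h

lemma r_mem_Deg (M : Multiset I) (i : I) : r B M i ∈ Deg (Multiset.card M) := by
  intro N hN
  exact r_supp B N hN

lemma fmon_mem_Deg (M : Multiset I) (i : I) :
    fmon B M i ∈ Deg (Multiset.card M + 1) := by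
  refine Submodule.add_mem _ (single_mem_Deg (by simp)) ?_
  exact Deg_mono (Nat.le_succ _) (r_mem_Deg B M i)

lemma T_mem_Deg {v : Multiset I →₀ ℂ} {n : ℕ} (hv : v ∈ Deg n) (i : I) :
    T B i v ∈ Deg (n + 1) := by
  rw [T_apply]
  refine Submodule.sum_mem _ fun M hM => Submodule.smul_mem _ _ ?_
  exact Deg_mono (by exact Nat.succ_le_succ (hv hM)) (fmon_mem_Deg B M i)

lemma σa_apply_eq (y : L) (v : Multiset I →₀ ℂ) :
    σa B y v = (B.repr y).sum fun k c => c • T B k v := by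
  rw [σa, Module.Basis.constr_apply]
  simp only [Finsupp.sum, LinearMap.coe_sum, Finset.sum_apply, LinearMap.smul_apply]

lemma σa_mem_Deg {v : Multiset I →₀ ℂ} {n : ℕ} (hv : v ∈ Deg n) (y : L) :
    σa B y v ∈ Deg (n + 1) := by
  rw [σa_apply_eq]
  exact Submodule.sum_mem _ fun k hk => Submodule.smul_mem _ _ (T_mem_Deg B hv k)

/-- The bilinear "commutator defect" `(y, y') ↦ σ y ∘ σ y' - σ y' ∘ σ y - σ ⁅y,y'⁆`. -/
noncomputable def Ψ : L →ₗ[ℂ] L →ₗ[ℂ]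
    ((Multiset I →₀ ℂ) →ₗ[ℂ] (Multiset I →₀ ℂ)) :=
  LinearMap.mk₂ ℂ
    (fun y y' => σa B y ∘ₗ σa B y' - σa B y' ∘ₗ σa B y - σa B ⁅y, y'⁆)
    (by intro y₁ y₂ y'; simp only [map_add, add_lie, LinearMap.add_comp,
          LinearMap.comp_add]; abel)
    (by intro c y y'; simp only [map_smul, smul_lie, LinearMap.smul_comp,
          LinearMap.comp_smul]; module)
    (by intro y y'₁ y'₂; simp only [map_add, lie_add, LinearMap.add_comp,
          LinearMap.comp_add]; abel)
    (by intro c y y'; simp only [map_smul, lie_smul, LinearMap.smul_comp,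
          LinearMap.comp_smul]; module)

lemma Ψ_apply (y y' : L) (v : Multiset I →₀ ℂ) :
    Ψ B y y' v = σa B y (σa B y' v) - σa B y' (σa B y v) - σa B ⁅y, y'⁆ v := rfl

theorem comm_main : ∀ n : ℕ, ∀ v ∈ Deg (I := I) n, ∀ y y' : L,
    σa B y (σa B y' v) = σa B y' (σa B y v) + σa B ⁅y, y'⁆ v := by
  intro n
  induction n using Nat.strong_induction_on with
  | _ n ih =>
  have key : ∀ M : Multiset I, Multiset.card M ≤ n → ∀ i j : I, j < i →
      T B i (T B j (Finsupp.single M 1)) =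
        T B j (T B i (Finsupp.single M 1)) + σa B ⁅B i, B j⁆ (Finsupp.single M 1) := by
    intro M hM i j hij
    by_cases hjm : (↑j : WithTop I) ≤ mmin M
    · exact comm_single_min B hjm hij
    · have hM0 : M ≠ 0 := by
        rintro rfl
        exact hjm (by rw [mmin_zero]; exact le_top)
      obtain ⟨l, hl, hlm⟩ := exists_mmin hM0
      have hlj : l < j := by
        by_contra hc
        exact hjm (hl ▸ WithTop.coe_le_coe.mpr (not_lt.mp hc))
      have hli : l < i := hlj.trans hij
      set M' := M.erase l with hM'
      have hcons : l ::ₘ M' = M := Multiset.cons_erase hlm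
      have hlM' : (↑l : WithTop I) ≤ mmin M' := by
        rw [le_mmin]
        intro b hb
        exact hl ▸ mmin_le (Multiset.mem_of_mem_erase hb)
      have hM'c : Multiset.card M' < Multiset.card M := Multiset.card_erase_lt_of_mem hlm
      have hM'n : Multiset.card M' < n := lt_of_lt_of_le hM'c hM
      have IH : ∀ v ∈ Deg (I := I) (Multiset.card M'), ∀ y y' : L,
          σa B y (σa B y' v) = σa B y' (σa B y v) + σa B ⁅y, y'⁆ v :=
        ih _ hM'n
      set z' : Multiset I →₀ ℂ := Finsupp.single M' 1 with hz'
      have hz'mem : z' ∈ Deg (I := I) (Multiset.card M') := single_mem_Deg le_rfl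
      have e0 : T B l z' = Finsupp.single M 1 := by
        rw [hz', T_single_min B hlM', hcons]
      -- commuting `T i'` past `T l` applied to `T j' z'`
      have cA : ∀ i' j' : I, l < i' → l < j' →
          T B i' (T B l (T B j' z')) =
            T B l (T B i' (T B j' z')) + σa B ⁅B i', B l⁆ (T B j' z') := by
        intro i' j' hli' hlj'
        have hTj : T B j' z' = Finsupp.single (j' ::ₘ M') 1 + r B M' j' := by
          rw [hz', T_single, fmon]
        have hminj' : (↑l : WithTop I) ≤ mmin (j' ::ₘ M') := by
          rw [mmin_cons]
          exact le_min (WithTop.coe_le_coe.mpr hlj'.le) hlM'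
        have c1 := comm_single_min B (N := j' ::ₘ M') hminj' hli'
        have c2 := IH (r B M' j') (r_mem_Deg B M' j') (B i') (B l)
        rw [σa_basis B i', σa_basis B l] at c2
        rw [hTj]
        simp only [map_add]
        rw [c1, c2]
        abel
      have h_jl : T B j (T B l z') = T B l (T B j z') + σa B ⁅B j, B l⁆ z' :=
        comm_single_min B hlM' hlj
      have h_il : T B i (T B l z') = T B l (T B i z') + σa B ⁅B i, B l⁆ z' :=
        comm_single_min B hlM' hli
      have d1 := IH z' hz'mem (B i) (B j)
      rw [σa_basis B i, σa_basis B j] at d1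
      have d2 := IH z' hz'mem ⁅B i, B l⁆ (B j)
      rw [σa_basis B j] at d2
      have d3 := IH z' hz'mem ⁅B j, B l⁆ (B i)
      rw [σa_basis B i] at d3
      have d4 := IH z' hz'mem ⁅B i, B j⁆ (B l)
      rw [σa_basis B l] at d4
      have hJac : ⁅⁅B i, B l⁆, B j⁆ = ⁅⁅B i, B j⁆, B l⁆ + ⁅⁅B j, B l⁆, B i⁆ := by
        have e1 : ⁅⁅B i, B l⁆, B j⁆ = ⁅B i, ⁅B l, B j⁆⁆ - ⁅B l, ⁅B i, B j⁆⁆ :=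
          lie_lie _ _ _
        have e2 : ⁅⁅B i, B j⁆, B l⁆ = -⁅B l, ⁅B i, B j⁆⁆ := (lie_skew _ _).symm
        have e3 : ⁅⁅B j, B l⁆, B i⁆ = ⁅B i, ⁅B l, B j⁆⁆ := by
          rw [(lie_skew ⁅B j, B l⁆ (B i)).symm, ← lie_neg, (lie_skew (B l) (B j))]
        rw [e1, e2, e3]
        abel
      rw [← e0, h_jl, h_il, d4]
      simp only [map_add]
      rw [cA i j hli hlj, cA j i hlj hli, d1, d2, d3, hJac]
      simp only [map_add, LinearMap.add_apply]
      abel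
  -- all pairs of basis vectors
  have hsingle : ∀ M : Multiset I, Multiset.card M ≤ n → ∀ i j : I,
      Ψ B (B i) (B j) (Finsupp.single M 1) = 0 := by
    intro M hM i j
    rw [Ψ_apply]
    rcases lt_trichotomy i j with hij | rfl | hij
    · have hk := key M hM j i hij
      have hskew : ⁅B j, B i⁆ = -⁅B i, B j⁆ := by
        rw [← lie_skew (B i) (B j), neg_neg]
      rw [σa_basis B i, σa_basis B j, hk, hskew]
      simp only [map_neg, LinearMap.neg_apply]
      abel
    · simp [lie_self]
    · have hk := key M hM i j hij
      rw [σa_basis B i, σa_basis B j, hk]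
      abel
  -- extend to all of `Deg n` by linearity in `v`
  have hDeg : ∀ v ∈ Deg (I := I) n, ∀ i j : I, Ψ B (B i) (B j) v = 0 := by
    intro v hv i j
    rw [Deg, Finsupp.supported_eq_span_single] at hv
    induction hv using Submodule.span_induction with
    | mem w hw =>
      obtain ⟨M, hM, rfl⟩ := hw
      exact hsingle M hM i j
    | zero => simp
    | add w₁ w₂ _ _ h1 h2 => rw [map_add, h1, h2, add_zero]
    | smul c w _ h1 => rw [map_smul, h1, smul_zero]
  -- extend to all pairs `y y'` by linearity
  intro v hv y y'
  have hall : ∀ y y' : L, Ψ B y y' v = 0 := by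
    intro y y'
    have hzero : (Ψ B).compr₂ (LinearMap.applyₗ v) = 0 := by
      apply B.ext
      intro i
      apply B.ext
      intro j
      simpa using hDeg v hv i j
    have := LinearMap.congr_fun (LinearMap.congr_fun hzero y) y'
    simpa using this
  have h := hall y y'
  rw [Ψ_apply, sub_sub, sub_eq_zero] at h
  exact h

lemma mem_Deg_sup (v : Multiset I →₀ ℂ) :
    v ∈ Deg (I := I) (v.support.sup Multiset.card) := by
  rw [Deg, Finsupp.mem_supported]
  intro N hN
  exact Finset.le_sup (f := Multiset.card) hN

/-- The PBW representation, as a morphism of Lie algebras. -/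
noncomputable def piLie : L →ₗ⁅ℂ⁆ Module.End ℂ (Multiset I →₀ ℂ) :=
  { σa B with
    map_lie' := by
      intro y y'
      apply LinearMap.ext
      intro v
      have h := comm_main B (v.support.sup Multiset.card) v (mem_Deg_sup v) y y'
      show σa B ⁅y, y'⁆ v = ⁅σa B y, σa B y'⁆ v
      change _ = (σa B y * σa B y' - σa B y' * σa B y) v
      simp only [LinearMap.sub_apply, Module.End.mul_apply]
      rw [h]
      abel }

lemma piLie_apply (y : L) : piLie B y = σa B y := rfl

include B in
theorem ι_inj_of_basis {w : L} (h : UniversalEnvelopingAlgebra.ι ℂ w = 0) : w = 0 := by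
  have hσ : σa B w = 0 := by
    have h2 := congrArg (UniversalEnvelopingAlgebra.lift ℂ (piLie B)) h
    rw [UniversalEnvelopingAlgebra.lift_ι_apply, map_zero] at h2
    exact h2
  have happ := LinearMap.congr_fun hσ (Finsupp.single 0 1)
  rw [LinearMap.zero_apply] at happ
  rw [σa_single] at happ
  have hf : ∀ k : I, fmon B (0 : Multiset I) k = Finsupp.single (k ::ₘ 0) (1 : ℂ) :=
    fun k => by rw [fmon, r_eq_zero B (by rw [mmin_zero]; exact le_top), add_zero]
  have hmd : Finsupp.mapDomain (fun k : I => k ::ₘ (0 : Multiset I)) (B.repr w) = 0 := by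
    rw [Finsupp.mapDomain, ← happ]
    apply Finsupp.sum_congr
    intro k _
    rw [hf k, Finsupp.smul_single', mul_one]
  have hrepr : B.repr w = 0 := by
    apply Finsupp.mapDomain_injective (f := fun k : I => k ::ₘ (0 : Multiset I)) ?_
    · rw [hmd, Finsupp.mapDomain_zero]
    · intro a b hab
      simpa using hab
  have := congrArg (B.repr.symm) hrepr
  simpa using this

end PBWAux

theorem uea_iota_injective {L : Type*} [LieRing L] [LieAlgebra ℂ L] {w : L}
    (h : UniversalEnvelopingAlgebra.ι ℂ w = 0) : w = 0 := by
  letI : LinearOrder ↥(Module.Basis.ofVectorSpaceIndex ℂ L) :=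
    IsWellOrder.linearOrder WellOrderingRel
  exact PBWAux.ι_inj_of_basis (Module.Basis.ofVectorSpace ℂ L) h



open TensorProduct in
lemma tmul_self_eq_zero {V : Type*} [AddCommGroup V] [Module ℂ V] {x : V}
    (h : x ⊗ₜ[ℂ] x = 0) : x = 0 := by
  by_contra hx0
  have hli : LinearIndepOn ℂ id ({x} : Set V) :=
    (linearIndepOn_singleton_iff (R := ℂ) (v := (id : V → V)) (i := x)).mpr hx0
  let B := Module.Basis.extend hli
  have hxmem : x ∈ LinearIndepOn.extend hli (Set.subset_univ _) := LinearIndepOn.subset_extend hli _ rfl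
  have hBx : B ⟨x, hxmem⟩ = x := Module.Basis.extend_apply_self hli ⟨x, hxmem⟩
  set f : V →ₗ[ℂ] ℂ := B.coord ⟨x, hxmem⟩ with hf
  have hfx : f x = 1 := by
    have h1 : f (B ⟨x, hxmem⟩) = 1 := by
      rw [hf, Module.Basis.coord_apply, Module.Basis.repr_self, Finsupp.single_eq_same]
    rwa [hBx] at h1
  have hφ := congrArg (TensorProduct.lift ((LinearMap.lsmul ℂ V).comp f)) h
  rw [map_zero, TensorProduct.lift.tmul] at hφ
  simp only [LinearMap.comp_apply, LinearMap.lsmul_apply, hfx, one_smul] at hφ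
  exact hx0 hφ

open TensorProduct in

/-- With `𝔤 = 𝔯₋ ⊕ 𝔪 ⊕ 𝔯₊`, `𝔯₊` an abelian `𝔪`-module and `z` central
in `𝔪` with `[z,x] = x` for `x ∈ 𝔯₊`, the map `φ : 𝔪 ⊕ 𝔯₊ → U(𝔤)`,
`φ(w + x) = ι w + ι x · z_c` (`z_c = ι z + c`), is an injective Lie algebra
homomorphism from the parabolic `𝔭 = 𝔪 ⊕ 𝔯₊` (whose bracket is
`[(w,x),(w',x')] = ([w,w'], [w,x'] − [w',x])`) into `U(𝔤)` with the commutator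
bracket.  This is expressed elementwise below. -/
theorem stmt2 (g : Type*) [LieRing g] [LieAlgebra ℂ g]
    (rneg m rpos : LieSubalgebra ℂ g)
    (hdec : DirectSum.IsInternal ![rneg.toSubmodule, m.toSubmodule, rpos.toSubmodule])
    (habelian : ∀ x ∈ rpos, ∀ x' ∈ rpos, ⁅x, x'⁆ = 0)
    (hmx : ∀ w ∈ m, ∀ x ∈ rpos, ⁅w, x⁆ ∈ rpos)
    (z : g) (hzm : z ∈ m) (hzcentral : ∀ w ∈ m, ⁅z, w⁆ = 0)
    (hzx : ∀ x ∈ rpos, ⁅z, x⁆ = x) (c : ℂ) :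
    let ι := UniversalEnvelopingAlgebra.ι ℂ (L := g)
    let zc : UniversalEnvelopingAlgebra ℂ g := ι z + algebraMap ℂ _ c
    (∀ w ∈ m, ∀ x ∈ rpos, ∀ w' ∈ m, ∀ x' ∈ rpos,
      ⁅ι w + ι x * zc, ι w' + ι x' * zc⁆ =
        ι ⁅w, w'⁆ + ι (⁅w, x'⁆ - ⁅w', x⁆) * zc) ∧
    (∀ w ∈ m, ∀ x ∈ rpos, ι w + ι x * zc = 0 → w = 0 ∧ x = 0) := by
  intro ι zc
  letI : LieRing (UniversalEnvelopingAlgebra ℂ g) := LieRing.ofAssociativeRing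
  have hlie_mul : ∀ a b d : UniversalEnvelopingAlgebra ℂ g,
      ⁅a, b * d⁆ = ⁅a, b⁆ * d + b * ⁅a, d⁆ := by
    intro a b d
    simp only [LieRing.of_associative_ring_bracket]
    noncomm_ring
  have hmul_lie : ∀ a b d : UniversalEnvelopingAlgebra ℂ g,
      ⁅a * b, d⁆ = a * ⁅b, d⁆ + ⁅a, d⁆ * b := by
    intro a b d
    simp only [LieRing.of_associative_ring_bracket]
    noncomm_ring
  have hmap : ∀ a b : g, ⁅ι a, ι b⁆ = ι ⁅a, b⁆ := fun a b =>
    ((UniversalEnvelopingAlgebra.ι ℂ).map_lie a b).symm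
  have halg : ∀ a : UniversalEnvelopingAlgebra ℂ g,
      ⁅a, algebraMap ℂ (UniversalEnvelopingAlgebra ℂ g) c⁆ = 0 := by
    intro a
    rw [LieRing.of_associative_ring_bracket, ← Algebra.commutes, sub_self]
  have hwzc : ∀ w' ∈ m, ⁅ι w', zc⁆ = 0 := by
    intro w' hw'
    have h1 : ⁅w', z⁆ = 0 := by rw [← lie_skew, hzcentral w' hw', neg_zero]
    rw [lie_add, hmap, h1, map_zero ι, halg, add_zero]
  have hzcx : ∀ x' ∈ rpos, ⁅zc, ι x'⁆ = ι x' := by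
    intro x' hx'
    have : ⁅algebraMap ℂ (UniversalEnvelopingAlgebra ℂ g) c, ι x'⁆ = 0 := by
      rw [← lie_skew, halg, neg_zero]
    rw [add_lie, hmap, hzx x' hx', this, add_zero]
  constructor
  · intro w hw x hx w' hw' x' hx'
    have h2 : ⁅ι w, ι x' * zc⁆ = ι ⁅w, x'⁆ * zc := by
      rw [hlie_mul, hmap, hwzc w hw, mul_zero, add_zero]
    have h3 : ⁅ι x * zc, ι w'⁆ = -(ι ⁅w', x⁆ * zc) := by
      have hz : ⁅zc, ι w'⁆ = 0 := by rw [← lie_skew, hwzc w' hw', neg_zero]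
      have hxw : ⁅x, w'⁆ = -⁅w', x⁆ := by rw [← lie_skew]
      rw [hmul_lie, hz, mul_zero, zero_add, hmap, hxw, map_neg ι, neg_mul]
    have h4 : ⁅ι x * zc, ι x' * zc⁆ = 0 := by
      have ha : ⁅zc, ι x' * zc⁆ = ι x' * zc := by
        rw [hlie_mul, hzcx x' hx', lie_self, mul_zero, add_zero]
      have hxz : ⁅ι x, zc⁆ = -ι x := by
        rw [lie_add, hmap, halg, add_zero, show ⁅x, z⁆ = -x by
          rw [← lie_skew, hzx x hx], map_neg ι]
      have hb : ⁅ι x, ι x' * zc⁆ = -(ι x' * ι x) := by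
        rw [hlie_mul, hmap, habelian x hx x' hx', map_zero ι, zero_mul, zero_add,
          hxz, mul_neg]
      have hcomm : ι x * ι x' = ι x' * ι x := by
        have := hmap x x'
        rw [habelian x hx x' hx', map_zero ι, LieRing.of_associative_ring_bracket,
          sub_eq_zero] at this
        exact this
      rw [hmul_lie, ha, hb, ← mul_assoc, hcomm, neg_mul, add_neg_cancel]
    simp only [lie_add, add_lie, hmap, h2, h3, h4, map_sub, sub_mul]
    have h1 : ⁅w, w'⁆ = ⁅w, w'⁆ := rfl
    abel
  · intro w hw x hx heq
    -- step 1: bracket with `ι z` to kill the `ι w` part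
    have hxzc : ι x * zc = 0 := by
      have h0 : ⁅ι z, ι w + ι x * zc⁆ = 0 := by rw [heq, lie_zero]
      have h1 : ⁅ι z, ι w⁆ = 0 := by rw [hmap, hzcentral w hw, map_zero ι]
      have h2 : ⁅ι z, zc⁆ = 0 := by rw [lie_add, lie_self, halg, add_zero]
      have h3 : ⁅ι z, ι x * zc⁆ = ι x * zc := by
        rw [hlie_mul, hmap, hzx x hx, h2, mul_zero, add_zero]
      rwa [lie_add, h1, zero_add, h3] at h0
    have hw0 : ι w = 0 := by rwa [hxzc, add_zero] at heq
    -- step 2: `x = 0` using the adjoint and tensor square representations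
    have hcx : c • x = 0 := by
      have h1 := congrArg (UniversalEnvelopingAlgebra.lift ℂ (LieModule.toEnd ℂ g g)) hxzc
      rw [map_mul, map_add, UniversalEnvelopingAlgebra.lift_ι_apply,
        UniversalEnvelopingAlgebra.lift_ι_apply, AlgHom.commutes, map_zero] at h1
      have h2 := LinearMap.congr_fun h1 z
      simp only [Module.End.mul_apply, LinearMap.add_apply, LinearMap.zero_apply,
        LieModule.toEnd_apply_apply, Module.algebraMap_end_apply, lie_self, zero_add,
        lie_smul] at h2
      rw [show ⁅x, z⁆ = -x by rw [← lie_skew, hzx x hx], smul_neg, neg_eq_zero] at h2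
      exact h2
    have htens : x ⊗ₜ[ℂ] x + c • (x ⊗ₜ[ℂ] x) = 0 := by
      have h1 := congrArg
        (UniversalEnvelopingAlgebra.lift ℂ (LieModule.toEnd ℂ g (g ⊗[ℂ] g))) hxzc
      rw [map_mul, map_add, UniversalEnvelopingAlgebra.lift_ι_apply,
        UniversalEnvelopingAlgebra.lift_ι_apply, AlgHom.commutes, map_zero] at h1
      have h2 := LinearMap.congr_fun h1 (z ⊗ₜ[ℂ] x)
      simp only [Module.End.mul_apply, LinearMap.add_apply, LinearMap.zero_apply,
        LieModule.toEnd_apply_apply, Module.algebraMap_end_apply,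
        TensorProduct.LieModule.lie_tmul_right, lie_self, lie_smul,
        TensorProduct.zero_tmul, TensorProduct.tmul_zero, zero_add, add_zero,
        hzx x hx] at h2
      simp only [lie_add, lie_smul, TensorProduct.LieModule.lie_tmul_right, lie_self,
        TensorProduct.tmul_zero, add_zero] at h2
      rw [show ⁅x, z⁆ = -x by rw [← lie_skew, hzx x hx]] at h2
      simp only [TensorProduct.neg_tmul, smul_neg] at h2
      rw [← neg_add, neg_eq_zero] at h2
      exact h2
    have hx0 : x = 0 := by
      rcases eq_or_ne c 0 with rfl | hc
      · rw [zero_smul, add_zero] at htens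
        exact tmul_self_eq_zero htens
      · exact (smul_eq_zero.mp hcx).resolve_left hc
    exact ⟨uea_iota_injective hw0, hx0⟩
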